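/- Let α, γ > 0 with α·γ < 2, and let K ≥ 1 be a real number with α·γ/2 ≤ K. Then for every natural number k, ∑_{i=0}^{k−1} ( α/(i + K) )² · ∏_{j=i+1}^{k−1} ( 1 − α·γ/(2(j + K)) ) ≤ ( 8α²/(2 − αγ) ) · (k + K)^{−αγ/2}. -/

import Mathlib

open Real Finset

private lemma log_sum_aux (K : ℝ) (hK : 1 ≤ K) (m n : ℕ) (hmn : m ≤ n) :
    Real.log ((n:ℝ)+K) - Real.log ((m:ℝ)+K) ≤ ∑ j ∈ Finset.Ico m n, 1/((j:ℝ)+K) := by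
  induction n, hmn using Nat.le_induction with
  | base => simp
  | succ n hmn ih =>
    rw [Finset.sum_Ico_succ_top hmn]
    have hpos : (0:ℝ) < (n:ℝ)+K := by positivity
    have hpos2 : (0:ℝ) < (n:ℝ)+1+K := by positivity
    have h := Real.log_le_sub_one_of_pos (show (0:ℝ) < ((n:ℝ)+1+K)/((n:ℝ)+K) by positivity)
    rw [Real.log_div (ne_of_gt hpos2) (ne_of_gt hpos)] at h
    have heq : ((n:ℝ)+1+K)/((n:ℝ)+K) - 1 = 1/((n:ℝ)+K) := by field_simp; ring
    rw [heq] at h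
    push_cast
    linarith

private lemma step3_aux (a q : ℝ) (ha : 1 ≤ a) (hq0 : 0 < q) (hq1 : q < 1) :
    q * (a+1) ^ (-q-1) ≤ a ^ (-q) - (a+1) ^ (-q) := by
  set b := a + 1 with hb
  have hb1 : (1:ℝ) ≤ b := by simp only [hb]; linarith
  have hbpos : (0:ℝ) < b := by linarith
  have hapos : (0:ℝ) < a := by linarith
  have hber : (1 + (-1/b)) ^ q ≤ 1 + q * (-1/b) :=
    rpow_one_add_le_one_add_mul_self
      (by rw [neg_div, neg_le_neg_iff, div_le_one hbpos]; exact hb1) hq0.le hq1.le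
  have he1 : 1 + (-1/b) = a/b := by field_simp; linarith
  have he2 : 1 + q * (-1/b) = 1 - q/b := by ring
  rw [he1, he2] at hber
  have hpos : (0:ℝ) < (a/b) ^ q := Real.rpow_pos_of_pos (by positivity) q
  have key : (1 + q/b) * (a/b)^q ≤ 1 := by nlinarith [sq_nonneg (q/b), div_pos hq0 hbpos]
  have key2 : 1 + q/b ≤ (b/a)^q := by
    have h1 : 1 + q/b ≤ 1/((a/b)^q) := (le_div_iff₀ hpos).mpr key
    rwa [one_div, ← Real.inv_rpow (by positivity), inv_div] at h1
  have hbq : (0:ℝ) < b ^ (-q) := Real.rpow_pos_of_pos hbpos _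
  have h2 : (1 + q/b) * b^(-q) ≤ (b/a)^q * b^(-q) :=
    mul_le_mul_of_nonneg_right key2 hbq.le
  have h3 : (b/a)^q * b^(-q) = a^(-q) := by
    rw [Real.div_rpow hbpos.le hapos.le, Real.rpow_neg hbpos.le, Real.rpow_neg hapos.le]
    field_simp
  have h4 : (1 + q/b) * b^(-q) = b^(-q) + q * b^(-q-1) := by
    rw [show -q-1 = -q + -1 by ring, Real.rpow_add hbpos, Real.rpow_neg_one]
    field_simp
  rw [h3, h4] at h2
  linarith

private lemma prod_bound_aux (c K : ℝ) (hc0 : 0 < c) (hcK : c ≤ K) (hK : 1 ≤ K)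
    (i k : ℕ) (hik : i < k) :
    ∏ j ∈ Finset.Ico (i+1) k, (1 - c/((j:ℝ)+K)) ≤ ((i:ℝ)+1+K)^c * ((k:ℝ)+K)^(-c) := by
  have hbpos : (0:ℝ) < (i:ℝ)+1+K := by positivity
  have hBpos : (0:ℝ) < (k:ℝ)+K := by positivity
  have h1 : ∏ j ∈ Finset.Ico (i+1) k, (1 - c/((j:ℝ)+K)) ≤
      ∏ j ∈ Finset.Ico (i+1) k, Real.exp (-(c/((j:ℝ)+K))) := by
    apply Finset.prod_le_prod
    · intro j _
      have hj : (0:ℝ) < (j:ℝ)+K := by positivity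
      have : c/((j:ℝ)+K) ≤ 1 := by
        rw [div_le_one hj]; have : (0:ℝ) ≤ (j:ℝ) := Nat.cast_nonneg j; linarith
      linarith
    · intro j _
      have := Real.add_one_le_exp (-(c/((j:ℝ)+K)))
      linarith
  rw [← Real.exp_sum] at h1
  have hsum : ∑ j ∈ Finset.Ico (i+1) k, -(c/((j:ℝ)+K)) =
      -c * ∑ j ∈ Finset.Ico (i+1) k, 1/((j:ℝ)+K) := by
    rw [Finset.mul_sum]
    apply Finset.sum_congr rfl
    intro j _; field_simp
  have hlog := log_sum_aux K hK (i+1) k hik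
  push_cast at hlog
  have h2 : ∑ j ∈ Finset.Ico (i+1) k, -(c/((j:ℝ)+K)) ≤
      -c * (Real.log ((k:ℝ)+K) - Real.log ((i:ℝ)+1+K)) := by
    rw [hsum]
    exact mul_le_mul_of_nonpos_left hlog (show -c ≤ 0 by linarith)
  have h3 : Real.exp (∑ j ∈ Finset.Ico (i+1) k, -(c/((j:ℝ)+K))) ≤
      Real.exp (-c * (Real.log ((k:ℝ)+K) - Real.log ((i:ℝ)+1+K))) :=
    Real.exp_le_exp.mpr h2
  have h4 : Real.exp (-c * (Real.log ((k:ℝ)+K) - Real.log ((i:ℝ)+1+K))) =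
      ((i:ℝ)+1+K)^c * ((k:ℝ)+K)^(-c) := by
    rw [Real.rpow_def_of_pos hbpos, Real.rpow_def_of_pos hBpos, ← Real.exp_add]
    congr 1; ring
  calc ∏ j ∈ Finset.Ico (i+1) k, (1 - c/((j:ℝ)+K))
      ≤ Real.exp (∑ j ∈ Finset.Ico (i+1) k, -(c/((j:ℝ)+K))) := h1
    _ ≤ _ := h3
    _ = _ := h4

/-- variance-sum bound, stepsize `α_k = α/(k+K)`, regime `αγ < 2`. -/
theorem variance_sum_bound_xi_one
    (α γ K : ℝ) (hα : 0 < α) (hγ : 0 < γ) (hαγ : α * γ < 2) (hK : 1 ≤ K)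
    (hαγK : α * γ / 2 ≤ K) (k : ℕ) :
    ∑ i ∈ Finset.range k,
        (α / ((i : ℝ) + K)) ^ 2 *
          ∏ j ∈ Finset.Ico (i + 1) k, (1 - α * γ / (2 * ((j : ℝ) + K))) ≤
      (8 * α ^ 2 / (2 - α * γ)) * ((k : ℝ) + K) ^ (-(α * γ / 2)) := by
  set c := α * γ / 2 with hc
  have hc0 : 0 < c := by positivity
  have hc1 : c < 1 := by rw [hc]; linarith
  have hBpos : (0:ℝ) < (k:ℝ)+K := by positivity
  have hBc : (0:ℝ) ≤ ((k:ℝ)+K)^(-c) := (Real.rpow_pos_of_pos hBpos _).le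
  set g : ℕ → ℝ := fun i => ((i:ℝ)+K)^(c-1) with hg
  have key : ∀ i ∈ Finset.range k,
      (α / ((i : ℝ) + K)) ^ 2 *
          ∏ j ∈ Finset.Ico (i + 1) k, (1 - α * γ / (2 * ((j : ℝ) + K))) ≤
        (4 * α^2 / (1 - c) * ((k:ℝ)+K)^(-c)) * (g i - g (i+1)) := by
    intro i hi
    rw [Finset.mem_range] at hi
    have hapos : (0:ℝ) < (i:ℝ)+K := by positivity
    have ha1 : (1:ℝ) ≤ (i:ℝ)+K := by
      have : (0:ℝ) ≤ (i:ℝ) := Nat.cast_nonneg i; linarith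
    have hbpos : (0:ℝ) < (i:ℝ)+1+K := by positivity
    -- rewrite the product terms
    have hprodeq : ∏ j ∈ Finset.Ico (i + 1) k, (1 - α * γ / (2 * ((j : ℝ) + K))) =
        ∏ j ∈ Finset.Ico (i + 1) k, (1 - c/((j:ℝ)+K)) := by
      apply Finset.prod_congr rfl
      intro j _
      rw [hc, div_div]
    rw [hprodeq]
    have hP := prod_bound_aux c K hc0 (by rw [hc]; exact hαγK) hK i k hi
    have hs : (0:ℝ) ≤ (α / ((i:ℝ)+K))^2 := sq_nonneg _
    have h1 : (α / ((i:ℝ)+K))^2 * ∏ j ∈ Finset.Ico (i + 1) k, (1 - c/((j:ℝ)+K)) ≤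
        (α / ((i:ℝ)+K))^2 * (((i:ℝ)+1+K)^c * ((k:ℝ)+K)^(-c)) :=
      mul_le_mul_of_nonneg_left hP hs
    -- (α/(i+K))² * (i+1+K)^c ≤ 4α² (i+1+K)^(c-2)
    have h2 : (α / ((i:ℝ)+K))^2 * ((i:ℝ)+1+K)^c ≤ 4 * α^2 * ((i:ℝ)+1+K)^(c-2) := by
      have hbc2 : ((i:ℝ)+1+K)^(c-2) = ((i:ℝ)+1+K)^c / ((i:ℝ)+1+K)^2 := by
        rw [show c - 2 = c - (2:ℕ) by norm_num, Real.rpow_sub hbpos, Real.rpow_natCast]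
      have hbc : (0:ℝ) ≤ ((i:ℝ)+1+K)^c := (Real.rpow_pos_of_pos hbpos _).le
      have hq : ((i:ℝ)+1+K)^2 ≤ 4 * ((i:ℝ)+K)^2 := by nlinarith
      have hcross : α^2 * ((i:ℝ)+1+K)^c * ((i:ℝ)+1+K)^2 ≤
          4 * α^2 * ((i:ℝ)+1+K)^c * ((i:ℝ)+K)^2 := by
        calc α^2 * ((i:ℝ)+1+K)^c * ((i:ℝ)+1+K)^2
            ≤ α^2 * ((i:ℝ)+1+K)^c * (4 * ((i:ℝ)+K)^2) := by
              apply mul_le_mul_of_nonneg_left hq (by positivity)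
          _ = 4 * α^2 * ((i:ℝ)+1+K)^c * ((i:ℝ)+K)^2 := by ring
      rw [hbc2, div_pow, div_mul_eq_mul_div, ← mul_div_assoc]
      exact (div_le_div_iff₀ (by positivity) (by positivity)).mpr hcross
    -- Bernoulli step
    have h3 : (1-c) * ((i:ℝ)+1+K)^(c-2) ≤ g i - g (i+1) := by
      have h := step3_aux ((i:ℝ)+K) (1-c) ha1 (by linarith) (by linarith)
      rw [show -(1-c) = c - 1 by ring, show c-1-1 = c-2 by ring,
        show (i:ℝ)+K+1 = (i:ℝ)+1+K by ring] at h
      simp only [hg]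
      push_cast
      convert h using 3 <;> ring
    have h4 : ((i:ℝ)+1+K)^(c-2) ≤ (g i - g (i+1))/(1-c) := by
      rw [le_div_iff₀ (by linarith)]
      calc ((i:ℝ)+1+K)^(c-2) * (1-c) = (1-c) * ((i:ℝ)+1+K)^(c-2) := by ring
        _ ≤ g i - g (i+1) := h3
    calc (α / ((i:ℝ)+K))^2 * ∏ j ∈ Finset.Ico (i + 1) k, (1 - c/((j:ℝ)+K))
        ≤ (α / ((i:ℝ)+K))^2 * (((i:ℝ)+1+K)^c * ((k:ℝ)+K)^(-c)) := h1
      _ = ((α / ((i:ℝ)+K))^2 * ((i:ℝ)+1+K)^c) * ((k:ℝ)+K)^(-c) := by ring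
      _ ≤ (4 * α^2 * ((i:ℝ)+1+K)^(c-2)) * ((k:ℝ)+K)^(-c) :=
          mul_le_mul_of_nonneg_right h2 hBc
      _ ≤ (4 * α^2 * ((g i - g (i+1))/(1-c))) * ((k:ℝ)+K)^(-c) := by
          apply mul_le_mul_of_nonneg_right _ hBc
          exact mul_le_mul_of_nonneg_left h4 (by positivity)
      _ = (4 * α^2 / (1 - c) * ((k:ℝ)+K)^(-c)) * (g i - g (i+1)) := by ring
  calc ∑ i ∈ Finset.range k,
        (α / ((i : ℝ) + K)) ^ 2 *
          ∏ j ∈ Finset.Ico (i + 1) k, (1 - α * γ / (2 * ((j : ℝ) + K)))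
      ≤ ∑ i ∈ Finset.range k,
          (4 * α^2 / (1 - c) * ((k:ℝ)+K)^(-c)) * (g i - g (i+1)) :=
        Finset.sum_le_sum key
    _ = (4 * α^2 / (1 - c) * ((k:ℝ)+K)^(-c)) * (g 0 - g k) := by
        rw [← Finset.mul_sum, Finset.sum_range_sub']
    _ ≤ (4 * α^2 / (1 - c) * ((k:ℝ)+K)^(-c)) * 1 := by
        apply mul_le_mul_of_nonneg_left _
          (mul_nonneg (div_nonneg (by positivity) (by linarith)) hBc)
        have hg0 : g 0 ≤ 1 := by
          simp only [hg, Nat.cast_zero, zero_add]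
          exact Real.rpow_le_one_of_one_le_of_nonpos hK (by linarith)
        have hgk : 0 ≤ g k := (Real.rpow_pos_of_pos hBpos _).le
        linarith
    _ = (8 * α ^ 2 / (2 - α * γ)) * ((k : ℝ) + K) ^ (-(α*γ/2)) := by
        rw [mul_one, hc, show 1 - α*γ/2 = (2 - α*γ)/2 by ring, div_div_eq_mul_div]
        ring
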